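/- Let k be a field and consider the field of Hahn series HahnSeries ℝ k (formal series Σ_{λ∈ℝ} c_λ T^λ with well-ordered support). The subset Λ consisting of those series whose support is bounded below and has finite intersection with every bounded subset of ℝ is a subfield: it contains 0 and 1, is closed under addition, negation, and multiplication, and the inverse (in HahnSeries ℝ k) of every nonzero element of Λ again belongs to Λ. -/

import Mathlib

open Set

/-- The Novikov field inside the field of Hahn series `HahnSeries ℝ k`: the set of series
`Σ_{λ∈ℝ} c_λ T^λ` whose support (set of exponents with nonvanishing coefficient) is bounded
below and has finite intersection with every bounded subset of `ℝ`. -/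
def novikovField (k : Type*) [Field k] : Set (HahnSeries ℝ k) :=
  {f | BddBelow f.support ∧ ∀ B : Set ℝ, Bornology.IsBounded B → (f.support ∩ B).Finite}

section aux

variable {k : Type*} [Field k]

lemma novikov_mem_iff {f : HahnSeries ℝ k} :
    f ∈ novikovField k ↔ ∀ c : ℝ, (f.support ∩ Set.Iic c).Finite := by
  constructor
  · rintro ⟨⟨b, hb⟩, h2⟩ c
    refine ((h2 (Set.Icc b c) (Metric.isBounded_Icc b c)).subset ?_)
    rintro x ⟨hx, hxc⟩
    exact ⟨hx, hb hx, hxc⟩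
  · intro h
    constructor
    · have : f.support ⊆ (f.support ∩ Set.Iic 0) ∪ Set.Ioi 0 := by
        intro x hx
        rcases le_or_gt x 0 with h0 | h0
        · exact Or.inl ⟨hx, h0⟩
        · exact Or.inr h0
      exact (BddBelow.union (h 0).bddBelow bddBelow_Ioi).mono this
    · intro B hB
      obtain ⟨c, hc⟩ := hB.bddAbove
      exact (h c).subset (Set.inter_subset_inter_right _ fun x hx => hc hx)

lemma novikov_of_subset {f : HahnSeries ℝ k} {T : Set ℝ}
    (hsub : f.support ⊆ T) (hT : ∀ c : ℝ, (T ∩ Set.Iic c).Finite) :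
    f ∈ novikovField k := by
  rw [novikov_mem_iff]
  exact fun c => (hT c).subset (Set.inter_subset_inter_left _ hsub)

lemma novikov_of_finite {f : HahnSeries ℝ k} (hf : f.support.Finite) :
    f ∈ novikovField k :=
  ⟨hf.bddBelow, fun _ _ => hf.inter_of_left _⟩

lemma novikov_mem_nonneg {S : Set ℝ} (hpos : S ⊆ Set.Ioi 0) {x : ℝ}
    (hx : x ∈ AddSubmonoid.closure S) : 0 ≤ x := by
  induction hx using AddSubmonoid.closure_induction with
  | mem y hy => exact le_of_lt (hpos hy)
  | zero => exact le_refl 0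
  | add a b _ _ ha hb => exact add_nonneg ha hb

lemma novikov_decomp {S : Set ℝ} {x : ℝ}
    (hx : x ∈ AddSubmonoid.closure S) (hx0 : x ≠ 0) :
    ∃ s ∈ S, ∃ y ∈ AddSubmonoid.closure S, x = s + y := by
  induction hx using AddSubmonoid.closure_induction with
  | mem y hy => exact ⟨y, hy, 0, zero_mem _, (add_zero y).symm⟩
  | zero => exact absurd rfl hx0
  | add a b ha hb iha ihb =>
    by_cases ha0 : a = 0
    · subst ha0; rw [zero_add] at hx0 ⊢; exact ihb hx0
    · obtain ⟨s, hs, y, hy, rfl⟩ := iha ha0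
      exact ⟨s, hs, y + b, add_mem hy hb, add_assoc s y b⟩

lemma closure_inter_Iic_finite {S : Set ℝ} (hpos : S ⊆ Set.Ioi 0)
    (hfin : ∀ c : ℝ, (S ∩ Set.Iic c).Finite) (c : ℝ) :
    ((AddSubmonoid.closure S : Set ℝ) ∩ Set.Iic c).Finite := by
  by_cases hS : (S ∩ Set.Iic c).Nonempty
  · obtain ⟨ε, hεS, hεmin⟩ := Set.exists_min_image (S ∩ Set.Iic c) id (hfin c) hS
    simp only [id] at hεmin
    have hε : 0 < ε := hpos hεS.1
    have key : ∀ n : ℕ, ∀ d : ℝ, d ≤ c → d < n * ε →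
        ((AddSubmonoid.closure S : Set ℝ) ∩ Set.Iic d).Finite := by
      intro n
      induction n with
      | zero =>
        intro d _ hd
        rw [Nat.cast_zero, zero_mul] at hd
        refine Set.Finite.subset (Set.finite_empty) ?_
        rintro x ⟨hx, hxd⟩
        simp only [Set.mem_Iic] at hxd
        exact absurd (le_trans (novikov_mem_nonneg hpos hx) hxd) (not_le.mpr hd)
      | succ n ih =>
        intro d hdc hdn
        have hfin' : ((AddSubmonoid.closure S : Set ℝ) ∩ Set.Iic (d - ε)).Finite :=
          ih (d - ε) (by linarith) (by push_cast at hdn ⊢; linarith)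
        refine Set.Finite.subset
          ((Set.finite_singleton (0:ℝ)).union
            ((hfin c).biUnion (fun s _ => hfin'.image (fun y => s + y)))) ?_
        rintro x ⟨hx, hxd⟩
        simp only [Set.mem_Iic] at hxd
        by_cases hx0 : x = 0
        · exact Or.inl hx0
        · obtain ⟨s, hs, y, hy, rfl⟩ := novikov_decomp hx hx0
          have hy0 : 0 ≤ y := novikov_mem_nonneg hpos hy
          have hspos : 0 < s := hpos hs
          have hsc : s ∈ S ∩ Set.Iic c := ⟨hs, by simp only [Set.mem_Iic]; linarith⟩
          have hεs : ε ≤ s := hεmin s hsc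
          refine Or.inr (Set.mem_biUnion hsc ⟨y, ⟨hy, ?_⟩, rfl⟩)
          simp only [Set.mem_Iic]; linarith
    obtain ⟨n, hn⟩ := exists_nat_gt (c / ε)
    exact key n c le_rfl (by rwa [div_lt_iff₀ hε] at hn)
  · refine Set.Finite.subset (Set.finite_singleton (0:ℝ)) ?_
    rintro x ⟨hx, hxc⟩
    simp only [Set.mem_Iic] at hxc
    by_cases hx0 : x = 0
    · exact hx0
    · obtain ⟨s, hs, y, hy, rfl⟩ := novikov_decomp hx hx0
      have hy0 : 0 ≤ y := novikov_mem_nonneg hpos hy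
      have hspos : 0 < s := hpos hs
      exact absurd ⟨s, hs, by simp only [Set.mem_Iic]; linarith⟩ hS

lemma novikov_add {f g : HahnSeries ℝ k} (hf : f ∈ novikovField k)
    (hg : g ∈ novikovField k) : f + g ∈ novikovField k := by
  rw [novikov_mem_iff] at hf hg ⊢
  intro c
  refine Set.Finite.subset ((hf c).union (hg c)) ?_
  rintro x ⟨hx, hxc⟩
  rcases HahnSeries.support_add_subset _ _ hx with h | h
  · exact Or.inl ⟨h, hxc⟩
  · exact Or.inr ⟨h, hxc⟩

lemma novikov_mul {f g : HahnSeries ℝ k} (hf : f ∈ novikovField k)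
    (hg : g ∈ novikovField k) : f * g ∈ novikovField k := by
  obtain ⟨⟨a, ha⟩, -⟩ := id hf
  obtain ⟨⟨b, hb⟩, -⟩ := id hg
  rw [novikov_mem_iff] at hf hg ⊢
  intro c
  refine Set.Finite.subset (Set.Finite.add (hf (c - b)) (hg (c - a))) ?_
  rintro x ⟨hx, hxc⟩
  simp only [Set.mem_Iic] at hxc
  obtain ⟨u, hu, v, hv, rfl⟩ := HahnSeries.support_mul_subset hx
  have hau : a ≤ u := ha hu
  have hbv : b ≤ v := hb hv
  have hxc' : u + v ≤ c := hxc
  exact ⟨u, ⟨hu, by simp only [Set.mem_Iic]; linarith [hxc']⟩,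
    v, ⟨hv, by simp only [Set.mem_Iic]; linarith [hxc']⟩, rfl⟩

end aux

/-- The Novikov field is a subfield of the field of Hahn series `HahnSeries ℝ k`: it contains
`0` and `1`, is closed under addition, negation and multiplication, and the inverse (taken in
`HahnSeries ℝ k`) of every nonzero element of it again belongs to it. -/
theorem novikovField_is_subfield (k : Type*) [Field k] :
    (0 : HahnSeries ℝ k) ∈ novikovField k ∧
    (1 : HahnSeries ℝ k) ∈ novikovField k ∧
    (∀ f g : HahnSeries ℝ k, f ∈ novikovField k → g ∈ novikovField k →
      f + g ∈ novikovField k) ∧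
    (∀ f : HahnSeries ℝ k, f ∈ novikovField k → -f ∈ novikovField k) ∧
    (∀ f g : HahnSeries ℝ k, f ∈ novikovField k → g ∈ novikovField k →
      f * g ∈ novikovField k) ∧
    (∀ f : HahnSeries ℝ k, f ∈ novikovField k → f ≠ 0 → f⁻¹ ∈ novikovField k) := by
  have h1 : (1 : HahnSeries ℝ k) ∈ novikovField k := by
    refine novikov_of_finite (Set.Finite.subset (Set.finite_singleton 0) ?_)
    rw [← HahnSeries.single_zero_one]
    exact HahnSeries.support_single_subset
  have hneg : ∀ f : HahnSeries ℝ k, f ∈ novikovField k → -f ∈ novikovField k := by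
    intro f hf
    rw [novikov_mem_iff] at hf ⊢
    intro c
    rw [HahnSeries.support_neg]
    exact hf c
  refine ⟨novikov_of_finite (by simp [HahnSeries.support_zero]), h1,
    fun f g hf hg => novikov_add hf hg, hneg,
    fun f g hf hg => novikov_mul hf hg, ?_⟩
  intro f hf hf0
  -- explicit inverse
  have hc : f.leadingCoeff ≠ 0 := HahnSeries.leadingCoeff_ne_zero.mpr hf0
  have hu : (f.leadingCoeff)⁻¹ * f.leadingCoeff = 1 := inv_mul_cancel₀ hc
  have hyo : 0 < (1 - HahnSeries.single (-f.order) (f.leadingCoeff)⁻¹ * f).orderTop :=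
    HahnSeries.unit_aux f hu _ (neg_add_cancel f.order)
  set y : HahnSeries ℝ k := 1 - HahnSeries.single (-f.order) (f.leadingCoeff)⁻¹ * f with hy
  have hfg : f * (HahnSeries.single (-f.order) (f.leadingCoeff)⁻¹ *
      (HahnSeries.SummableFamily.powers y).hsum) = 1 := by
    have h := HahnSeries.SummableFamily.one_sub_self_mul_hsum_powers hyo
    rw [show (1 : HahnSeries ℝ k) - y
        = HahnSeries.single (-f.order) (f.leadingCoeff)⁻¹ * f from by
      rw [hy, sub_sub_cancel]] at h
    rw [← mul_assoc, mul_comm f, h]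
  rw [inv_eq_of_mul_eq_one_right hfg]
  -- y is in the Novikov field
  have hsingle : (HahnSeries.single (-f.order) (f.leadingCoeff)⁻¹ : HahnSeries ℝ k)
      ∈ novikovField k :=
    novikov_of_finite ((Set.finite_singleton _).subset HahnSeries.support_single_subset)
  have hyN : y ∈ novikovField k := by
    rw [hy, sub_eq_add_neg]
    exact novikov_add h1 (hneg _ (novikov_mul hsingle hf))
  -- the support of y is positive
  have hypos : y.support ⊆ Set.Ioi 0 := by
    intro s hs
    have hle := HahnSeries.orderTop_le_of_coeff_ne_zero hs
    have h0s : (0 : WithTop ℝ) < (s : WithTop ℝ) := lt_of_lt_of_le hyo hle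
    exact_mod_cast h0s
  -- support of powers of y lies in the closure of the support of y
  have hpow : ∀ n : ℕ, (y ^ n).support ⊆ (AddSubmonoid.closure y.support : Set ℝ) := by
    intro n
    induction n with
    | zero =>
      rw [pow_zero, ← HahnSeries.single_zero_one]
      intro x hx
      have hx' := HahnSeries.support_single_subset hx
      rw [Set.mem_singleton_iff] at hx'
      rw [hx']
      exact zero_mem _
    | succ n ih =>
      rw [pow_succ]
      intro x hx
      obtain ⟨u, hu, v, hv, rfl⟩ := HahnSeries.support_mul_subset hx
      exact add_mem (ih hu) (AddSubmonoid.subset_closure hv)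
  -- support of the candidate inverse
  have hgsub : (HahnSeries.single (-f.order) (f.leadingCoeff)⁻¹ *
      (HahnSeries.SummableFamily.powers y).hsum).support
      ⊆ (fun t => -f.order + t) '' (AddSubmonoid.closure y.support : Set ℝ) := by
    intro x hx
    obtain ⟨u, hu, v, hv, rfl⟩ := HahnSeries.support_mul_subset hx
    have hu' : u = -f.order := HahnSeries.support_single_subset hu
    have hv' : v ∈ (AddSubmonoid.closure y.support : Set ℝ) := by
      have hvv := HahnSeries.SummableFamily.support_hsum_subset hv
      rw [Set.mem_iUnion] at hvv
      obtain ⟨n, hn⟩ := hvv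
      rw [show (HahnSeries.SummableFamily.powers y) n = y ^ n from
        congrFun (HahnSeries.SummableFamily.coe_powers hyo) n] at hn
      exact hpow n hn
    exact ⟨v, hv', by rw [hu']⟩
  -- conclude
  have hyfin : ∀ c : ℝ, (y.support ∩ Set.Iic c).Finite := novikov_mem_iff.mp hyN
  refine novikov_of_subset hgsub ?_
  intro c
  have hcl := closure_inter_Iic_finite hypos hyfin (c + f.order)
  refine Set.Finite.subset (hcl.image (fun t => -f.order + t)) ?_
  rintro x ⟨hx, hxc⟩
  obtain ⟨t, ht, rfl⟩ := hx
  simp only [Set.mem_Iic] at hxc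
  exact ⟨t, ⟨ht, by simp only [Set.mem_Iic]; linarith⟩, rfl⟩
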